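/- Let h₀, k_s, k_l, α_s, α_l be positive real constants. The function F₂ : (0,∞) → ℝ defined by F₂(x) = h₀ k_s √(π α_l) e^{−x²} F₁((√α_s/√α_l)x) / (k_l (k_s + h₀√(π α_s) erf(x))) is strictly decreasing on (0,∞), with F₂(x) → (h₀/k_l)√(α_l π) as x → 0⁺ and F₂(x) → 0 as x → +∞. -/

import Mathlib

open Real Filter Set

/-- Gauss error function `erf x = (2/√π) ∫₀ˣ e^{−t²} dt`. -/
noncomputable def erf (x : ℝ) : ℝ := (2 / Real.sqrt π) * ∫ t in (0:ℝ)..x, Real.exp (-t ^ 2)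

/-- Complementary error function. -/
noncomputable def erfc (x : ℝ) : ℝ := 1 - erf x

/-- `F₁(x) = erfc(x) · e^{x²}`. -/
noncomputable def F1f (x : ℝ) : ℝ := erfc x * Real.exp (x ^ 2)

/-- `F₂(x) = h₀ k_s √(π α_l) e^{−x²} F₁((√α_s/√α_l)x) / (k_l(k_s + h₀√(π α_s) erf(x)))`. -/
noncomputable def F2f (h₀ ks kl αs αl : ℝ) (x : ℝ) : ℝ :=
  h₀ * ks * Real.sqrt (π * αl) * Real.exp (-x ^ 2)
      * F1f ((Real.sqrt αs / Real.sqrt αl) * x)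
    / (kl * (ks + h₀ * Real.sqrt (π * αs) * erf x))

open MeasureTheory

lemma gauss_cont : Continuous fun t : ℝ => Real.exp (-t ^ 2) := by continuity

lemma gauss_int : Integrable fun t : ℝ => Real.exp (-t ^ 2) := by
  simpa using integrable_exp_neg_mul_sq one_pos

lemma gauss_mul_int : Integrable fun t : ℝ => t * Real.exp (-t ^ 2) := by
  simpa using integrable_mul_exp_neg_mul_sq one_pos

lemma gauss_Ioi : ∫ t in Ioi (0:ℝ), Real.exp (-t ^ 2) = Real.sqrt π / 2 := by
  simpa using integral_gaussian_Ioi 1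

lemma sqrt_pi_pos : 0 < Real.sqrt π := Real.sqrt_pos.2 Real.pi_pos

lemma erf_hasDerivAt (x : ℝ) :
    HasDerivAt erf (2 / Real.sqrt π * Real.exp (-x ^ 2)) x := by
  have h := intervalIntegral.integral_hasDerivAt_right
    (gauss_int.intervalIntegrable (a := 0) (b := x))
    (gauss_cont.stronglyMeasurableAtFilter _ _) gauss_cont.continuousAt
  exact h.const_mul (2 / Real.sqrt π)

lemma erf_continuous : Continuous erf := by
  have : Differentiable ℝ erf := fun x => (erf_hasDerivAt x).differentiableAt
  exact this.continuous

lemma erf_zero : erf 0 = 0 := by simp [erf]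

lemma erf_strictMono : StrictMono erf := by
  apply strictMono_of_deriv_pos
  intro x
  rw [(erf_hasDerivAt x).deriv]
  positivity

lemma erf_pos {x : ℝ} (hx : 0 < x) : 0 < erf x := by
  have := erf_strictMono hx
  rwa [erf_zero] at this

lemma erf_nonneg {x : ℝ} (hx : 0 ≤ x) : 0 ≤ erf x := by
  rcases hx.eq_or_lt with h | h
  · simp [← h, erf_zero]
  · exact (erf_pos h).le

/-- For `y ≥ 0`, `erfc y = (2/√π) ∫_{Ioi y} e^{−t²}`. -/
lemma erfc_eq_integral {y : ℝ} (hy : 0 ≤ y) :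
    erfc y = (2 / Real.sqrt π) * ∫ t in Ioi y, Real.exp (-t ^ 2) := by
  have hsplit : (∫ t in Ioc 0 y, Real.exp (-t ^ 2)) + ∫ t in Ioi y, Real.exp (-t ^ 2)
      = ∫ t in Ioi (0:ℝ), Real.exp (-t ^ 2) := by
    rw [← MeasureTheory.setIntegral_union (Ioc_disjoint_Ioi le_rfl) measurableSet_Ioi
      gauss_int.integrableOn gauss_int.integrableOn, Ioc_union_Ioi_eq_Ioi hy]
  have h01 : (∫ t in (0:ℝ)..y, Real.exp (-t ^ 2)) = ∫ t in Ioc 0 y, Real.exp (-t ^ 2) :=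
    intervalIntegral.integral_of_le hy
  have hπ : (2 / Real.sqrt π) * (Real.sqrt π / 2) = 1 := by
    field_simp
  rw [erfc, erf, h01]
  have : (∫ t in Ioc 0 y, Real.exp (-t ^ 2))
      = Real.sqrt π / 2 - ∫ t in Ioi y, Real.exp (-t ^ 2) := by
    rw [← gauss_Ioi, ← hsplit]; ring
  rw [this]
  field_simp
  ring

lemma integral_Ioi_gauss_le {y : ℝ} (hy : 0 < y) :
    (∫ t in Ioi y, Real.exp (-t ^ 2)) ≤ Real.exp (-y ^ 2) / (2 * y) := by
  have hval : (∫ t in Ioi y, t * Real.exp (-t ^ 2)) = Real.exp (-y ^ 2) / 2 := by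
    have hder : ∀ t ∈ Ici y, HasDerivAt (fun t : ℝ => -Real.exp (-t ^ 2) / 2)
        (t * Real.exp (-t ^ 2)) t := by
      intro t _
      have h1 : HasDerivAt (fun t : ℝ => -t ^ 2) (-(2 * t)) t := by
        simpa using ((hasDerivAt_pow 2 t).fun_neg)
      have h2 := (h1.exp).neg.div_const 2
      refine h2.congr_deriv ?_
      ring
    have hlim : Tendsto (fun t : ℝ => -Real.exp (-t ^ 2) / 2) atTop (nhds 0) := by
      have : Tendsto (fun t : ℝ => -t ^ 2) atTop atBot := by
        apply tendsto_neg_atBot_iff.2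
        exact tendsto_pow_atTop (by norm_num)
      have := (Real.tendsto_exp_atBot.comp this).neg.div_const 2
      simpa using this
    have := MeasureTheory.integral_Ioi_of_hasDerivAt_of_tendsto' hder
      gauss_mul_int.integrableOn hlim
    rw [this]; ring
  have hmono : (∫ t in Ioi y, Real.exp (-t ^ 2))
      ≤ ∫ t in Ioi y, (t / y) * Real.exp (-t ^ 2) := by
    apply MeasureTheory.setIntegral_mono_on gauss_int.integrableOn
    · have hint2 : MeasureTheory.Integrable (fun t : ℝ => t / y * Real.exp (-t ^ 2)) := by
        have h := gauss_mul_int.div_const y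
        convert h using 1
        ext t; ring
      exact hint2.integrableOn
    · exact measurableSet_Ioi
    · intro t ht
      have h1 : (1:ℝ) ≤ t / y := (one_le_div hy).2 (le_of_lt ht)
      nlinarith [Real.exp_pos (-t ^ 2)]
  have heq : (∫ t in Ioi y, (t / y) * Real.exp (-t ^ 2))
      = (1 / y) * ∫ t in Ioi y, t * Real.exp (-t ^ 2) := by
    rw [← MeasureTheory.integral_const_mul]
    congr 1; ext t; ring
  rw [heq, hval] at hmono
  calc (∫ t in Ioi y, Real.exp (-t ^ 2)) ≤ 1 / y * (Real.exp (-y ^ 2) / 2) := hmono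
    _ = Real.exp (-y ^ 2) / (2 * y) := by ring

lemma integral_Ioi_gauss_pos (y : ℝ) :
    0 < ∫ t in Ioi y, Real.exp (-t ^ 2) := by
  rw [MeasureTheory.setIntegral_pos_iff_support_of_nonneg_ae
    (Eventually.of_forall fun t => (Real.exp_pos _).le) gauss_int.integrableOn]
  have : Function.support (fun t : ℝ => Real.exp (-t ^ 2)) = univ := by
    ext t; simp [Function.mem_support, (Real.exp_pos _).ne']
  rw [this, univ_inter]
  simp [Real.volume_Ioi]

lemma erfc_pos {y : ℝ} (hy : 0 ≤ y) : 0 < erfc y := by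
  rw [erfc_eq_integral hy]
  have := integral_Ioi_gauss_pos y
  positivity

lemma F1f_pos {y : ℝ} (hy : 0 ≤ y) : 0 < F1f y :=
  mul_pos (erfc_pos hy) (Real.exp_pos _)

lemma F1f_zero : F1f 0 = 1 := by simp [F1f, erfc, erf_zero]

/-- Key bound: `y · F₁(y) ≤ 1/√π` for `y > 0`. -/
lemma key_bound {y : ℝ} (hy : 0 < y) : y * F1f y ≤ 1 / Real.sqrt π := by
  have h := integral_Ioi_gauss_le hy
  have hF : F1f y = (2 / Real.sqrt π) * (∫ t in Ioi y, Real.exp (-t ^ 2)) * Real.exp (y ^ 2) := by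
    rw [F1f, erfc_eq_integral hy.le]
  have hee : Real.exp (-y ^ 2) * Real.exp (y ^ 2) = 1 := by
    rw [← Real.exp_add]; simp
  have h2 : y * F1f y ≤ y * ((2 / Real.sqrt π) * (Real.exp (-y ^ 2) / (2 * y)) * Real.exp (y ^ 2)) := by
    rw [hF]
    have hπ : (0:ℝ) < 2 / Real.sqrt π := by positivity
    have ha := mul_le_mul_of_nonneg_left h hπ.le
    have hb := mul_le_mul_of_nonneg_right ha (Real.exp_pos (y ^ 2)).le
    exact mul_le_mul_of_nonneg_left hb hy.le
  calc y * F1f y ≤ y * ((2 / Real.sqrt π) * (Real.exp (-y ^ 2) / (2 * y)) * Real.exp (y ^ 2)) := h2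
    _ = (Real.exp (-y ^ 2) * Real.exp (y ^ 2)) / Real.sqrt π := by field_simp
    _ = 1 / Real.sqrt π := by rw [hee]

lemma F1f_hasDerivAt (y : ℝ) :
    HasDerivAt F1f (2 * y * F1f y - 2 / Real.sqrt π) y := by
  have h1 : HasDerivAt erfc (-(2 / Real.sqrt π * Real.exp (-y ^ 2))) y :=
    ((hasDerivAt_const y (1:ℝ)).sub (erf_hasDerivAt y)).congr_deriv (by ring)
  have h2 : HasDerivAt (fun y : ℝ => Real.exp (y ^ 2)) (2 * y * Real.exp (y ^ 2)) y := by
    have := ((hasDerivAt_pow 2 y).exp)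
    convert this using 1
    ring
  have h3 := h1.fun_mul h2
  have hee : Real.exp (-y ^ 2) * Real.exp (y ^ 2) = 1 := by
    rw [← Real.exp_add]; simp
  refine h3.congr_deriv ?_
  simp only [F1f]
  linear_combination (-(2 / Real.sqrt π)) * hee

lemma F1f_continuous : Continuous F1f := by
  have : Differentiable ℝ F1f := fun y => (F1f_hasDerivAt y).differentiableAt
  exact this.continuous


lemma F1f_le {y : ℝ} (hy : 0 < y) : F1f y ≤ 1 / (Real.sqrt π * y) := by
  have h := key_bound hy
  have h2 : Real.sqrt π * (y * F1f y) ≤ Real.sqrt π * (1 / Real.sqrt π) :=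
    mul_le_mul_of_nonneg_left h sqrt_pi_pos.le
  have h3 : Real.sqrt π * (1 / Real.sqrt π) = 1 := by
    field_simp
  rw [le_div_iff₀ (by positivity : (0:ℝ) < Real.sqrt π * y)]
  nlinarith [h2, h3]

lemma N_hasDerivAt (c x : ℝ) :
    HasDerivAt (fun x => Real.exp (-x ^ 2) * F1f (c * x))
      (Real.exp (-x ^ 2) * (2 * x * (c ^ 2 - 1) * F1f (c * x) - 2 * c / Real.sqrt π)) x := by
  have h1 : HasDerivAt (fun x : ℝ => Real.exp (-x ^ 2)) (-(2 * x) * Real.exp (-x ^ 2)) x := by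
    have := ((hasDerivAt_pow 2 x).fun_neg).exp
    convert this using 1
    ring
  have h2 : HasDerivAt (fun x => F1f (c * x))
      ((2 * (c * x) * F1f (c * x) - 2 / Real.sqrt π) * c) x := by
    have hg : HasDerivAt (fun x : ℝ => c * x) c x := by
      simpa using (hasDerivAt_id x).const_mul c
    exact (F1f_hasDerivAt (c * x)).comp x hg
  have h3 := h1.fun_mul h2
  refine h3.congr_deriv ?_
  ring

lemma N_strictAntiOn {c : ℝ} (hc : 0 < c) :
    StrictAntiOn (fun x => Real.exp (-x ^ 2) * F1f (c * x)) (Ioi 0) := by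
  apply strictAntiOn_of_deriv_neg (convex_Ioi 0)
  · exact (gauss_cont.mul (F1f_continuous.comp (continuous_const.mul continuous_id))).continuousOn
  · intro x hx
    rw [interior_Ioi] at hx
    rw [(N_hasDerivAt c x).deriv]
    have hx : (0:ℝ) < x := hx
    have hcx : 0 < c * x := mul_pos hc hx
    have hF := F1f_pos hcx.le
    have hkey := key_bound hcx
    have hπ := sqrt_pi_pos
    have hmain : 2 * x * (c ^ 2 - 1) * F1f (c * x) < 2 * c / Real.sqrt π := by
      rcases le_or_gt c 1 with h1 | h1
      · have hc2 : c ^ 2 ≤ 1 := by nlinarith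
        have hle : 2 * x * (c ^ 2 - 1) * F1f (c * x) ≤ 0 := by
          nlinarith [mul_nonneg (mul_nonneg (by linarith : (0:ℝ) ≤ 2 * x) hF.le)
            (by linarith : (0:ℝ) ≤ 1 - c ^ 2)]
        have hpos : 0 < 2 * c / Real.sqrt π := by positivity
        linarith
      · have hcpos : (0:ℝ) < c := hc
        have e1 : 2 * x * (c ^ 2 - 1) * F1f (c * x)
            = (2 * (c ^ 2 - 1) / c) * (c * x * F1f (c * x)) := by
          field_simp
        have hnn : (0:ℝ) ≤ 2 * (c ^ 2 - 1) / c := by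
          apply div_nonneg
          · nlinarith
          · linarith
        have e2 : (2 * (c ^ 2 - 1) / c) * (c * x * F1f (c * x))
            ≤ (2 * (c ^ 2 - 1) / c) * (1 / Real.sqrt π) :=
          mul_le_mul_of_nonneg_left hkey hnn
        have e3 : 2 * (c ^ 2 - 1) / c < 2 * c := by
          rw [div_lt_iff₀ hcpos]
          nlinarith
        have e4 : (2 * (c ^ 2 - 1) / c) * (1 / Real.sqrt π) < (2 * c) * (1 / Real.sqrt π) :=
          mul_lt_mul_of_pos_right e3 (by positivity)
        calc 2 * x * (c ^ 2 - 1) * F1f (c * x)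
            = (2 * (c ^ 2 - 1) / c) * (c * x * F1f (c * x)) := e1
          _ ≤ (2 * (c ^ 2 - 1) / c) * (1 / Real.sqrt π) := e2
          _ < (2 * c) * (1 / Real.sqrt π) := e4
          _ = 2 * c / Real.sqrt π := by ring
    exact mul_neg_of_pos_of_neg (Real.exp_pos _) (by linarith)

/-- `F₂` is strictly decreasing on `(0,∞)`, with `F₂(x) → (h₀/k_l)√(α_l π)` as `x → 0⁺`
and `F₂(x) → 0` as `x → +∞`. -/
theorem F2f_strictAntiOn_limits (h₀ ks kl αs αl : ℝ)
    (hh₀ : 0 < h₀) (hks : 0 < ks) (hkl : 0 < kl) (hαs : 0 < αs) (hαl : 0 < αl) :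
    StrictAntiOn (F2f h₀ ks kl αs αl) (Set.Ioi (0 : ℝ)) ∧
    Tendsto (F2f h₀ ks kl αs αl) (nhdsWithin 0 (Set.Ioi 0))
      (nhds ((h₀ / kl) * Real.sqrt (αl * π))) ∧
    Tendsto (F2f h₀ ks kl αs αl) atTop (nhds 0) := by
  set c : ℝ := Real.sqrt αs / Real.sqrt αl with hc_def
  have hc : 0 < c := div_pos (Real.sqrt_pos.2 hαs) (Real.sqrt_pos.2 hαl)
  set A : ℝ := h₀ * ks * Real.sqrt (π * αl) with hA_def
  have hA : 0 < A := by
    have := Real.sqrt_pos.2 (mul_pos Real.pi_pos hαl)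
    positivity
  set B : ℝ := h₀ * Real.sqrt (π * αs) with hB_def
  have hB : 0 < B := by
    have := Real.sqrt_pos.2 (mul_pos Real.pi_pos hαs)
    positivity
  have hF2 : ∀ x : ℝ, F2f h₀ ks kl αs αl x
      = A * (Real.exp (-x ^ 2) * F1f (c * x)) / (kl * (ks + B * erf x)) := by
    intro x
    simp only [F2f, hA_def, hB_def, hc_def]
    ring_nf
  have hDpos : ∀ x : ℝ, 0 ≤ x → 0 < kl * (ks + B * erf x) := by
    intro x hx
    have := erf_nonneg hx
    have : 0 < ks + B * erf x := by nlinarith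
    positivity
  refine ⟨?_, ?_, ?_⟩
  · -- strict antitone
    intro x hx y hy hxy
    have hx' : (0:ℝ) < x := hx
    have hy' : (0:ℝ) < y := hy
    have hN := N_strictAntiOn hc hx hy hxy
    have hNy : 0 < Real.exp (-y ^ 2) * F1f (c * y) :=
      mul_pos (Real.exp_pos _) (F1f_pos (by positivity))
    have hn2 : A * (Real.exp (-y ^ 2) * F1f (c * y)) < A * (Real.exp (-x ^ 2) * F1f (c * x)) :=
      mul_lt_mul_of_pos_left hN hA
    have hd1 : 0 < kl * (ks + B * erf x) := hDpos x hx'.le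
    have hd2 : kl * (ks + B * erf x) ≤ kl * (ks + B * erf y) := by
      apply mul_le_mul_of_nonneg_left _ hkl.le
      exact add_le_add_right (mul_le_mul_of_nonneg_left (erf_strictMono hxy).le hB.le) ks
    rw [hF2 x, hF2 y]
    have hNx : 0 < Real.exp (-x ^ 2) * F1f (c * x) :=
      mul_pos (Real.exp_pos _) (F1f_pos (by positivity))
    exact div_lt_div₀ hn2 hd2 (mul_pos hA hNx).le hd1
  · -- limit at 0⁺
    have hcont : ContinuousAt (F2f h₀ ks kl αs αl) 0 := by
      apply ContinuousAt.div
      · exact (Continuous.mul (continuous_const.mul gauss_cont)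
          (F1f_continuous.comp (continuous_const.mul continuous_id))).continuousAt
      · exact (continuous_const.mul
          (continuous_const.add (continuous_const.mul erf_continuous))).continuousAt
      · simp only [erf_zero, mul_zero, add_zero]
        positivity
    have h0 : F2f h₀ ks kl αs αl 0 = (h₀ / kl) * Real.sqrt (αl * π) := by
      simp only [F2f, erf_zero, mul_zero, add_zero, neg_zero, zero_pow, Real.exp_zero,
        F1f_zero, mul_one]
      rw [mul_comm αl π]
      field_simp
      ring
      simp
    have := hcont.continuousWithinAt (s := Set.Ioi 0)
    rw [ContinuousWithinAt, h0] at this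
    exact this
  · -- limit at ∞
    have hbound : ∀ x : ℝ, 0 < x → F2f h₀ ks kl αs αl x
        ≤ (A / (kl * ks * Real.sqrt π * c)) * (1 / x) := by
      intro x hx
      rw [hF2 x]
      have hcx : 0 < c * x := mul_pos hc hx
      have hN1 : Real.exp (-x ^ 2) * F1f (c * x) ≤ 1 / (Real.sqrt π * (c * x)) := by
        have h1 : Real.exp (-x ^ 2) ≤ 1 := by
          rw [Real.exp_le_one_iff]
          nlinarith
        have h2 := F1f_le hcx
        have h3 := (F1f_pos hcx.le).le
        calc Real.exp (-x ^ 2) * F1f (c * x) ≤ 1 * F1f (c * x) :=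
              mul_le_mul_of_nonneg_right h1 h3
          _ = F1f (c * x) := one_mul _
          _ ≤ 1 / (Real.sqrt π * (c * x)) := h2
      have hd : kl * ks ≤ kl * (ks + B * erf x) := by
        apply mul_le_mul_of_nonneg_left _ hkl.le
        have : 0 ≤ B * erf x := mul_nonneg hB.le (erf_nonneg hx.le)
        linarith
      have hNpos : 0 ≤ Real.exp (-x ^ 2) * F1f (c * x) :=
        (mul_pos (Real.exp_pos _) (F1f_pos hcx.le)).le
      calc A * (Real.exp (-x ^ 2) * F1f (c * x)) / (kl * (ks + B * erf x))
          ≤ A * (Real.exp (-x ^ 2) * F1f (c * x)) / (kl * ks) :=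
            div_le_div_of_nonneg_left (by positivity) (by positivity) hd
        _ ≤ A * (1 / (Real.sqrt π * (c * x))) / (kl * ks) := by
            apply div_le_div_of_nonneg_right _ (by positivity)
            exact mul_le_mul_of_nonneg_left hN1 hA.le
        _ = (A / (kl * ks * Real.sqrt π * c)) * (1 / x) := by
            have h1 : Real.sqrt π ≠ 0 := ne_of_gt sqrt_pi_pos
            have h2 : c ≠ 0 := ne_of_gt hc
            have h3 : x ≠ 0 := ne_of_gt hx
            field_simp
    have hlow : ∀ x : ℝ, 0 < x → 0 ≤ F2f h₀ ks kl αs αl x := by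
      intro x hx
      rw [hF2 x]
      have hcx : 0 < c * x := mul_pos hc hx
      have := (F1f_pos hcx.le).le
      have := (hDpos x hx.le).le
      positivity
    have hg : Tendsto (fun x : ℝ => (A / (kl * ks * Real.sqrt π * c)) * (1 / x)) atTop (nhds 0) := by
      have := tendsto_inv_atTop_zero.const_mul (A / (kl * ks * Real.sqrt π * c))
      simpa [one_div] using this
    apply tendsto_of_tendsto_of_tendsto_of_le_of_le' tendsto_const_nhds hg
    · filter_upwards [Ioi_mem_atTop (0:ℝ)] with x hx
      exact hlow x hx
    · filter_upwards [Ioi_mem_atTop (0:ℝ)] with x hx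
      exact hbound x hx
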